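/- Let n ≥ 1, let p ∈ ℝ, and let {(q_i, U_i)}_{i∈I} be a finite ensemble of 2^n × 2^n unitary matrices U_i with probabilities q_i ≥ 0, Σ_i q_i = 1, which is Pauli mixing in the following sense: for every i there exist a permutation π_i of the non-identity Pauli strings and a sign function ε_i into {+1, −1} such that U_i P U_i† = ε_i(P) · π_i(P) for every non-identity Pauli string P, and for all non-identity Pauli strings P, Q one has Σ_{i : π_i(P) = Q} q_i = 1/(4^n − 1). Then for every n-qubit density matrix ρ (Hermitian, positive semidefinite, trace 1), the expected purity of the ensemble after one layer of local depolarizing noise satisfies exactly: Σ_i q_i · Tr( (D_p^{⊗n}(U_i ρ U_i†))² ) = 2^{−n} + (Tr(ρ²) − 2^{−n}) · (1/(4^n − 1)) · Σ_{k=1}^{n} C(n,k) · 3^k · p^{2k}. -/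

import Mathlib

open Matrix BigOperators
open scoped ComplexOrder

noncomputable section

/-- The four single-qubit Pauli matrices: σ₀ = I, σ₁ = X, σ₂ = Y, σ₃ = Z. -/
def pauli : Fin 4 → Matrix (Fin 2) (Fin 2) ℂ :=
  ![1, !![0, 1; 1, 0], !![0, -Complex.I; Complex.I, 0], !![1, 0; 0, -1]]

/-- The 2^n × 2^n matrix associated to a Pauli string `P : Fin n → Fin 4`,
given by the n-fold Kronecker product ⊗ᵢ σ_{P i}. -/
def pauliMatrix {n : ℕ} (P : Fin n → Fin 4) :
    Matrix (Fin n → Fin 2) (Fin n → Fin 2) ℂ :=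
  Matrix.of fun x y => ∏ i, pauli (P i) (x i) (y i)

/-- The weight of a Pauli string: the number of sites acted on nontrivially. -/
def pweight {n : ℕ} (P : Fin n → Fin 4) : ℕ :=
  (Finset.univ.filter fun i => P i ≠ 0).card

/-- The single-qubit depolarizing channel `D_p` acting on qubit `i` of an n-qubit matrix:
`M ↦ p·M + (1-p)·Tr_i(M) ⊗ (I/2)_i`, written entrywise. -/
def depolSite {n : ℕ} (p : ℝ) (i : Fin n)
    (M : Matrix (Fin n → Fin 2) (Fin n → Fin 2) ℂ) :
    Matrix (Fin n → Fin 2) (Fin n → Fin 2) ℂ :=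
  Matrix.of fun x y =>
    (p : ℂ) * M x y +
      ((1 - p : ℝ) : ℂ) *
        (if x i = y i then
          (2 : ℂ)⁻¹ * ∑ v : Fin 2, M (Function.update x i v) (Function.update y i v)
        else 0)

/-- The n-fold local depolarizing channel `D_p^{⊗n}`, i.e. the (commuting) composition of the
single-qubit depolarizing channels on each of the n sites.  It is the unique linear map with
`D_p^{⊗n}(M₁ ⊗ ⋯ ⊗ Mₙ) = D_p(M₁) ⊗ ⋯ ⊗ D_p(Mₙ)`. -/
def depolN {n : ℕ} (p : ℝ)
    (M : Matrix (Fin n → Fin 2) (Fin n → Fin 2) ℂ) :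
    Matrix (Fin n → Fin 2) (Fin n → Fin 2) ℂ :=
  (List.finRange n).foldr (fun i acc => depolSite p i acc) M

/-! ### Single-qubit lemmas -/

lemma pauli_orth (s t : Fin 4) :
    ∑ a : Fin 2, ∑ b : Fin 2, pauli s a b * pauli t b a = if s = t then 2 else 0 := by
  fin_cases s <;> fin_cases t <;>
    simp [pauli, Fin.sum_univ_two, Matrix.one_apply, Complex.I_mul_I] <;> norm_num

lemma pauli_complete (a b c d : Fin 2) :
    ∑ s : Fin 4, pauli s a b * pauli s c d = if a = d ∧ b = c then 2 else 0 := by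
  fin_cases a <;> fin_cases b <;> fin_cases c <;> fin_cases d <;>
    simp [pauli, Fin.sum_univ_four, Matrix.one_apply, Complex.I_mul_I] <;> norm_num

lemma pauli_diag_sum (s : Fin 4) :
    ∑ v : Fin 2, pauli s v v = if s = 0 then 2 else 0 := by
  fin_cases s <;> simp [pauli, Fin.sum_univ_two, Matrix.one_apply]

/-! ### Pauli string lemmas -/

lemma pauliMatrix_zero {n : ℕ} : pauliMatrix (0 : Fin n → Fin 4) = 1 := by
  ext x y
  simp only [pauliMatrix, Matrix.of_apply, Pi.zero_apply, Matrix.one_apply]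
  by_cases h : x = y
  · subst h
    simp [pauli, Matrix.one_apply]
  · obtain ⟨i, hi⟩ := Function.ne_iff.mp h
    rw [if_neg h]
    exact Finset.prod_eq_zero (Finset.mem_univ i) (by simp [pauli, Matrix.one_apply, hi])

lemma trace_pauliMatrix_mul {n : ℕ} (P Q : Fin n → Fin 4) :
    (pauliMatrix P * pauliMatrix Q).trace = if P = Q then (2 : ℂ) ^ n else 0 := by
  have h1 : (pauliMatrix P * pauliMatrix Q).trace
      = ∑ x : Fin n → Fin 2, ∑ y : Fin n → Fin 2,
          ∏ i, (pauli (P i) (x i) (y i) * pauli (Q i) (y i) (x i)) := by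
    simp only [Matrix.trace, Matrix.diag, Matrix.mul_apply, pauliMatrix, Matrix.of_apply]
    refine Finset.sum_congr rfl fun x _ => Finset.sum_congr rfl fun y _ => ?_
    rw [Finset.prod_mul_distrib]
  rw [h1]
  have h2 : ∀ x : Fin n → Fin 2, ∑ y : Fin n → Fin 2,
      ∏ i, (pauli (P i) (x i) (y i) * pauli (Q i) (y i) (x i))
      = ∏ i, ∑ b : Fin 2, (pauli (P i) (x i) b * pauli (Q i) b (x i)) := fun x =>
    (Fintype.prod_sum fun i b => pauli (P i) (x i) b * pauli (Q i) b (x i)).symm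
  simp_rw [h2]
  rw [← Fintype.prod_sum fun i a => ∑ b : Fin 2, pauli (P i) a b * pauli (Q i) b a]
  rw [Finset.prod_congr rfl fun i _ => pauli_orth (P i) (Q i)]
  by_cases h : P = Q
  · subst h; simp
  · obtain ⟨i, hi⟩ : ∃ i, P i ≠ Q i := Function.ne_iff.mp h
    rw [if_neg h]
    exact Finset.prod_eq_zero (Finset.mem_univ i) (by simp [hi])

lemma pauli_expand {n : ℕ} (M : Matrix (Fin n → Fin 2) (Fin n → Fin 2) ℂ) :
    ∑ P : Fin n → Fin 4, (pauliMatrix P * M).trace • pauliMatrix P = ((2:ℂ)^n) • M := by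
  ext x y
  simp only [Matrix.sum_apply, Matrix.smul_apply, Matrix.trace, Matrix.diag, Matrix.mul_apply,
    pauliMatrix, Matrix.of_apply, smul_eq_mul, Finset.sum_mul]
  have key : ∀ z w : Fin n → Fin 2,
      ∑ P : Fin n → Fin 4, (∏ i, pauli (P i) (z i) (w i)) * ∏ i, pauli (P i) (x i) (y i)
      = if z = y ∧ w = x then (2:ℂ)^n else 0 := by
    intro z w
    have : ∀ P : Fin n → Fin 4, (∏ i, pauli (P i) (z i) (w i)) * ∏ i, pauli (P i) (x i) (y i)
        = ∏ i, (pauli (P i) (z i) (w i) * pauli (P i) (x i) (y i)) := fun P =>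
      (Finset.prod_mul_distrib).symm
    simp_rw [this]
    rw [← Fintype.prod_sum fun i s => pauli s (z i) (w i) * pauli s (x i) (y i)]
    rw [Finset.prod_congr rfl fun i _ => pauli_complete (z i) (w i) (x i) (y i)]
    by_cases h : z = y ∧ w = x
    · obtain ⟨h1, h2⟩ := h; subst h1; subst h2; simp
    · rw [if_neg h]
      rw [not_and_or] at h
      rcases h with h | h
      · obtain ⟨i, hi⟩ := Function.ne_iff.mp h
        exact Finset.prod_eq_zero (Finset.mem_univ i) (by simp [hi])
      · obtain ⟨i, hi⟩ := Function.ne_iff.mp h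
        exact Finset.prod_eq_zero (Finset.mem_univ i) (by simp [hi])
  calc ∑ P : Fin n → Fin 4, ∑ z, ∑ w, (∏ i, pauli (P i) (z i) (w i)) * M (w) (z) * ∏ i, pauli (P i) (x i) (y i)
      = ∑ z, ∑ w, M w z * ∑ P : Fin n → Fin 4, (∏ i, pauli (P i) (z i) (w i)) * ∏ i, pauli (P i) (x i) (y i) := by
        rw [Finset.sum_comm]
        refine Finset.sum_congr rfl fun z _ => ?_
        rw [Finset.sum_comm]
        refine Finset.sum_congr rfl fun w _ => ?_
        rw [Finset.mul_sum]
        refine Finset.sum_congr rfl fun P _ => by ring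
    _ = ∑ z, ∑ w, M w z * if z = y ∧ w = x then (2:ℂ)^n else 0 := by
        simp_rw [key]
    _ = (2:ℂ)^n * M x y := by
        simp [Finset.sum_ite_eq]
        rw [Finset.sum_eq_single y]
        · simp [mul_comm]
        · intro b _ hb; simp [Ne.symm, hb]
        · simp

lemma trace_pauli_sq_sum {n : ℕ} (M N : Matrix (Fin n → Fin 2) (Fin n → Fin 2) ℂ) :
    ∑ P : Fin n → Fin 4, (pauliMatrix P * M).trace * (pauliMatrix P * N).trace
      = (2:ℂ)^n * (M * N).trace := by
  have := congrArg (fun A => (A * N).trace) (pauli_expand M)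
  simp only [Matrix.sum_mul, Matrix.smul_mul, Matrix.trace_sum, Matrix.trace_smul,
    smul_eq_mul] at this
  exact this

/-! ### Depolarizing channel lemmas -/

lemma depolSite_smul {n : ℕ} (p : ℝ) (i : Fin n) (c : ℂ) (M) :
    depolSite p i (c • M) = c • depolSite p i M := by
  ext x y
  simp only [depolSite, Matrix.of_apply, Matrix.smul_apply, smul_eq_mul, Finset.mul_sum]
  by_cases h : x i = y i <;> simp [h, Finset.mul_sum] <;> ring

lemma depolSite_add {n : ℕ} (p : ℝ) (i : Fin n) (M N) :
    depolSite p i (M + N) = depolSite p i M + depolSite p i N := by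
  ext x y
  simp only [depolSite, Matrix.of_apply, Matrix.add_apply, Finset.sum_add_distrib]
  by_cases h : x i = y i <;> simp [h] <;> ring

lemma depolSite_pauli {n : ℕ} (p : ℝ) (i : Fin n) (P : Fin n → Fin 4) :
    depolSite p i (pauliMatrix P) = (if P i = 0 then 1 else (p:ℂ)) • pauliMatrix P := by
  ext x y
  have split : ∀ (a : Fin n → Fin 2) (b : Fin n → Fin 2),
      (∏ j, pauli (P j) (a j) (b j))
        = pauli (P i) (a i) (b i) * ∏ j ∈ Finset.univ.erase i, pauli (P j) (a j) (b j) :=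
    fun a b => (Finset.mul_prod_erase Finset.univ _ (Finset.mem_univ i)).symm
  have upd : ∀ v : Fin 2, pauliMatrix P (Function.update x i v) (Function.update y i v)
      = pauli (P i) v v * ∏ j ∈ Finset.univ.erase i, pauli (P j) (x j) (y j) := by
    intro v
    rw [pauliMatrix, Matrix.of_apply, split]
    simp only [Function.update_self]
    congr 1
    refine Finset.prod_congr rfl fun j hj => ?_
    rw [Function.update_of_ne (Finset.ne_of_mem_erase hj),
        Function.update_of_ne (Finset.ne_of_mem_erase hj)]
  have hsum : ∑ v : Fin 2, pauliMatrix P (Function.update x i v) (Function.update y i v)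
      = (if P i = 0 then 2 else 0) * ∏ j ∈ Finset.univ.erase i, pauli (P j) (x j) (y j) := by
    simp_rw [upd, ← Finset.sum_mul, pauli_diag_sum]
  simp only [depolSite, Matrix.of_apply, Matrix.smul_apply, smul_eq_mul]
  by_cases h0 : P i = 0
  · rw [if_pos h0]
    have hentry : pauliMatrix P x y
        = (if x i = y i then 1 else 0) * ∏ j ∈ Finset.univ.erase i, pauli (P j) (x j) (y j) := by
      rw [pauliMatrix, Matrix.of_apply, split, h0]
      congr 1
      try simp [pauli, Matrix.one_apply]
    by_cases hxy : x i = y i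
    · rw [if_pos hxy, hsum, if_pos h0, hentry, if_pos hxy]
      push_cast
      ring
    · rw [if_neg hxy, hentry, if_neg hxy]
      ring
  · rw [if_neg h0]
    by_cases hxy : x i = y i
    · rw [if_pos hxy, hsum, if_neg h0]
      ring
    · rw [if_neg hxy]
      ring

lemma depolN_pauli {n : ℕ} (p : ℝ) (P : Fin n → Fin 4) :
    depolN p (pauliMatrix P) = ((p:ℂ) ^ pweight P) • pauliMatrix P := by
  have key : ∀ l : List (Fin n),
      l.foldr (fun i acc => depolSite p i acc) (pauliMatrix P)
        = ((l.map fun i => if P i = 0 then 1 else (p:ℂ)).prod) • pauliMatrix P := by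
    intro l
    induction l with
    | nil => simp
    | cons i l ih =>
      simp only [List.foldr_cons, ih, List.map_cons, List.prod_cons, depolSite_smul,
        depolSite_pauli, smul_smul]
      ring_nf
  rw [depolN, key]
  congr 1
  rw [← Fin.prod_univ_def, pweight, ← Finset.prod_const, Finset.prod_filter]
  exact Finset.prod_congr rfl fun i _ => by by_cases h : P i = 0 <;> simp [h]

lemma foldr_depol_smul {n : ℕ} (p : ℝ) (l : List (Fin n)) (c : ℂ) (M) :
    l.foldr (fun i acc => depolSite p i acc) (c • M)
      = c • l.foldr (fun i acc => depolSite p i acc) M := by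
  induction l with
  | nil => rfl
  | cons i l ih => simp only [List.foldr_cons, ih, depolSite_smul]

lemma foldr_depol_add {n : ℕ} (p : ℝ) (l : List (Fin n)) (M N) :
    l.foldr (fun i acc => depolSite p i acc) (M + N)
      = l.foldr (fun i acc => depolSite p i acc) M
        + l.foldr (fun i acc => depolSite p i acc) N := by
  induction l with
  | nil => rfl
  | cons i l ih => simp only [List.foldr_cons, ih, depolSite_add]

lemma depolN_smul {n : ℕ} (p : ℝ) (c : ℂ) (M : Matrix (Fin n → Fin 2) (Fin n → Fin 2) ℂ) :
    depolN p (c • M) = c • depolN p M := foldr_depol_smul p _ c M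

lemma depolN_add {n : ℕ} (p : ℝ) (M N : Matrix (Fin n → Fin 2) (Fin n → Fin 2) ℂ) :
    depolN p (M + N) = depolN p M + depolN p N := foldr_depol_add p _ M N

lemma depolN_zero {n : ℕ} (p : ℝ) : depolN p (0 : Matrix (Fin n → Fin 2) (Fin n → Fin 2) ℂ) = 0 := by
  have := depolN_smul (n := n) p 0 0
  simpa using this

lemma depolN_sum {n : ℕ} (p : ℝ) {α : Type*} (s : Finset α)
    (f : α → Matrix (Fin n → Fin 2) (Fin n → Fin 2) ℂ) :
    depolN p (∑ a ∈ s, f a) = ∑ a ∈ s, depolN p (f a) := by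
  classical
  induction s using Finset.induction with
  | empty => simp [depolN_zero]
  | insert a s h ih => simp [Finset.sum_insert h, depolN_add, ih]

/-- Purity after depolarizing noise, in terms of Pauli coefficients. -/
lemma trace_depolN_sq {n : ℕ} (p : ℝ) (M : Matrix (Fin n → Fin 2) (Fin n → Fin 2) ℂ) :
    (depolN p M * depolN p M).trace
      = ((2:ℂ)^n)⁻¹ * ∑ P : Fin n → Fin 4,
          (p:ℂ) ^ (2 * pweight P) * ((pauliMatrix P * M).trace)^2 := by
  have h2n : (2:ℂ)^n ≠ 0 := pow_ne_zero _ two_ne_zero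
  have hD : ((2:ℂ)^n) • depolN p M
      = ∑ P : Fin n → Fin 4,
          ((pauliMatrix P * M).trace * (p:ℂ) ^ pweight P) • pauliMatrix P := by
    rw [← depolN_smul, ← pauli_expand M, depolN_sum]
    refine Finset.sum_congr rfl fun P _ => ?_
    rw [depolN_smul, depolN_pauli, smul_smul]
  have h2 : ((2:ℂ)^n * (2:ℂ)^n) * (depolN p M * depolN p M).trace
      = (2:ℂ)^n * ∑ P : Fin n → Fin 4,
          (p:ℂ) ^ (2 * pweight P) * ((pauliMatrix P * M).trace)^2 := by
    have lhs : ((2:ℂ)^n * (2:ℂ)^n) * (depolN p M * depolN p M).trace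
        = (((( (2:ℂ)^n) • depolN p M)) * (((2:ℂ)^n) • depolN p M)).trace := by
      rw [Matrix.smul_mul, Matrix.mul_smul, Matrix.trace_smul, Matrix.trace_smul]
      simp [smul_eq_mul]; ring
    rw [lhs, hD]
    rw [Matrix.sum_mul]
    simp_rw [Matrix.mul_sum, Matrix.smul_mul, Matrix.mul_smul, Matrix.trace_sum,
      Matrix.trace_smul, smul_smul, smul_eq_mul, trace_pauliMatrix_mul]
    rw [Finset.mul_sum]
    refine Finset.sum_congr rfl fun P _ => ?_
    rw [Finset.sum_eq_single P]
    · rw [if_pos rfl, pow_mul]; ring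
    · intro Q _ hQ; simp [Ne.symm hQ]
    · simp
  calc (depolN p M * depolN p M).trace
      = ((2:ℂ)^n * (2:ℂ)^n)⁻¹ * (((2:ℂ)^n * (2:ℂ)^n) * (depolN p M * depolN p M).trace) := by
        field_simp
    _ = ((2:ℂ)^n)⁻¹ * ∑ P : Fin n → Fin 4,
          (p:ℂ) ^ (2 * pweight P) * ((pauliMatrix P * M).trace)^2 := by
        rw [h2, mul_inv]
        field_simp

/-! ### Combinatorics -/

lemma weight_sum {n : ℕ} (p : ℝ) :
    ∑ P ∈ Finset.univ.filter (fun P : Fin n → Fin 4 => P ≠ 0), (p:ℂ) ^ (2 * pweight P)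
      = ∑ k ∈ Finset.Icc 1 n, (n.choose k : ℂ) * 3 ^ k * (p:ℂ) ^ (2 * k) := by
  classical
  have hall : ∑ P : Fin n → Fin 4, (p:ℂ) ^ (2 * pweight P) = (1 + 3 * (p:ℂ)^2) ^ n := by
    have hterm : ∀ P : Fin n → Fin 4, (p:ℂ) ^ (2 * pweight P)
        = ∏ i, (if P i = 0 then 1 else (p:ℂ)^2) := by
      intro P
      rw [pow_mul, pweight, ← Finset.prod_const, Finset.prod_filter]
      exact Finset.prod_congr rfl fun i _ => by by_cases h : P i = 0 <;> simp [h]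
    simp_rw [hterm]
    rw [← Fintype.prod_sum fun (_ : Fin n) (s : Fin 4) => if s = 0 then 1 else (p:ℂ)^2]
    have h4 : ∑ s : Fin 4, (if s = 0 then 1 else (p:ℂ)^2) = 1 + 3 * (p:ℂ)^2 := by
      rw [Fin.sum_univ_four, if_pos rfl, if_neg (by decide), if_neg (by decide),
        if_neg (by decide)]
      ring
    rw [Finset.prod_congr rfl fun i _ => h4, Finset.prod_const, Finset.card_univ,
      Fintype.card_fin]
  have hsplit : ∑ P : Fin n → Fin 4, (p:ℂ) ^ (2 * pweight P)
      = 1 + ∑ P ∈ Finset.univ.filter (fun P : Fin n → Fin 4 => P ≠ 0),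
          (p:ℂ) ^ (2 * pweight P) := by
    rw [← Finset.sum_filter_add_sum_filter_not Finset.univ (fun P : Fin n → Fin 4 => P = 0)]
    congr 1
    · rw [Finset.filter_eq' Finset.univ (0 : Fin n → Fin 4), if_pos (Finset.mem_univ _)]
      simp [pweight]
  have hbin : (1 + 3 * (p:ℂ)^2) ^ n
      = 1 + ∑ k ∈ Finset.Icc 1 n, (n.choose k : ℂ) * 3 ^ k * (p:ℂ) ^ (2 * k) := by
    rw [add_comm (1:ℂ), add_pow]
    simp only [one_pow, mul_one]
    rw [Finset.range_eq_Ico, Finset.sum_eq_sum_Ico_succ_bot (Nat.succ_pos n)]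
    simp only [pow_zero, Nat.choose_zero_right, Nat.cast_one, one_mul]
    congr 1
    rw [Nat.succ_eq_add_one, Finset.Ico_add_one_right_eq_Icc]
    refine Finset.sum_congr rfl fun k _ => ?_
    rw [mul_pow, ← pow_mul]
    ring
  linear_combination hall - hsplit + hbin

lemma trace_conj_mul {m : Type*} [Fintype m] [DecidableEq m] (Uu A B : Matrix m m ℂ)
    (hUu : Uuᴴ * Uu = 1) :
    ((Uu * A * Uuᴴ) * (Uu * B * Uuᴴ)).trace = (A * B).trace := by
  have h1 : (Uu * A * Uuᴴ) * (Uu * B * Uuᴴ) = Uu * (A * B) * Uuᴴ := by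
    calc (Uu * A * Uuᴴ) * (Uu * B * Uuᴴ)
        = Uu * (A * ((Uuᴴ * Uu) * (B * Uuᴴ))) := by simp only [Matrix.mul_assoc]
      _ = Uu * (A * B) * Uuᴴ := by rw [hUu, Matrix.one_mul]; simp only [Matrix.mul_assoc]
  rw [h1, Matrix.trace_mul_comm, ← Matrix.mul_assoc, ← Matrix.mul_assoc, hUu, Matrix.one_mul]

set_option maxHeartbeats 1600000 in
/-- for a Pauli-mixing ensemble `{(qᵢ, Uᵢ)}` and any n-qubit density matrix ρ, the
expected purity of the ensemble after one layer of local depolarizing noise is exactly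
`2^{-n} + (Tr(ρ²) − 2^{-n}) · (4^n − 1)⁻¹ · Σ_{k=1}^n C(n,k) 3^k p^{2k}`. -/
theorem expected_purity_pauli_mixing_ensemble
    {n : ℕ} (hn : 1 ≤ n) (p : ℝ) {I : Type} [Fintype I]
    (q : I → ℝ) (U : I → Matrix (Fin n → Fin 2) (Fin n → Fin 2) ℂ)
    (hq : ∀ i, 0 ≤ q i) (hqsum : ∑ i, q i = 1)
    (hU : ∀ i, U i ∈ Matrix.unitaryGroup (Fin n → Fin 2) ℂ)
    -- Pauli mixing: each Uᵢ conjugates every non-identity Pauli string to a signed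
    -- non-identity Pauli string via a permutation πᵢ and signs εᵢ ∈ {±1}, ...
    (π : I → Equiv.Perm {P : Fin n → Fin 4 // P ≠ 0})
    (ε : I → {P : Fin n → Fin 4 // P ≠ 0} → ℝ)
    (hε : ∀ i P, ε i P = 1 ∨ ε i P = -1)
    (hconj : ∀ i (P : {P : Fin n → Fin 4 // P ≠ 0}),
      U i * pauliMatrix P.1 * (U i)ᴴ = (ε i P : ℂ) • pauliMatrix ((π i) P).1)
    -- ... and each non-identity Pauli is mapped to each non-identity Pauli with total
    -- probability 1/(4^n − 1).
    (hmix : ∀ P Q : {P : Fin n → Fin 4 // P ≠ 0},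
      ∑ i ∈ Finset.univ.filter (fun i => π i P = Q), q i = 1 / (4 ^ n - 1))
    -- ρ is an n-qubit density matrix:
    (ρ : Matrix (Fin n → Fin 2) (Fin n → Fin 2) ℂ)
    (hherm : ρ.IsHermitian) (hpos : ρ.PosSemidef) (htr : ρ.trace = 1) :
    ∑ i, (q i : ℂ) *
        (depolN p (U i * ρ * (U i)ᴴ) * depolN p (U i * ρ * (U i)ᴴ)).trace
      = ((2 : ℂ) ^ n)⁻¹ +
        ((ρ * ρ).trace - ((2 : ℂ) ^ n)⁻¹) * ((4 : ℂ) ^ n - 1)⁻¹ *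
          ∑ k ∈ Finset.Icc 1 n, (n.choose k : ℂ) * 3 ^ k * (p : ℂ) ^ (2 * k) := by
  classical
  have h2n : (2:ℂ)^n ≠ 0 := pow_ne_zero _ two_ne_zero
  set σ : I → Matrix (Fin n → Fin 2) (Fin n → Fin 2) ℂ := fun i => U i * ρ * (U i)ᴴ with hσdef
  set t : {P : Fin n → Fin 4 // P ≠ 0} → ℂ := fun Q => (pauliMatrix Q.1 * ρ).trace with htdef
  set W : ℂ := ∑ k ∈ Finset.Icc 1 n, (n.choose k : ℂ) * 3 ^ k * (p:ℂ) ^ (2 * k) with hWdef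
  set r : ℂ := ((4:ℂ)^n - 1)⁻¹ with hrdef
  -- unitarity facts
  have hUU : ∀ i, (U i)ᴴ * U i = 1 := by
    intro i
    have := Matrix.mem_unitaryGroup_iff'.mp (hU i)
    simpa [Matrix.star_eq_conjTranspose] using this
  have htrσ : ∀ i, (σ i).trace = 1 := by
    intro i
    rw [hσdef]
    simp only
    rw [Matrix.trace_mul_comm, ← Matrix.mul_assoc, hUU i, Matrix.one_mul, htr]
  have hc0 : ∀ i, (pauliMatrix (0 : Fin n → Fin 4) * σ i).trace = 1 := by
    intro i
    rw [pauliMatrix_zero, Matrix.one_mul, htrσ i]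
  -- coefficients of σ i against nonzero Paulis
  have hcQ : ∀ i (Q : {P : Fin n → Fin 4 // P ≠ 0}),
      ((pauliMatrix Q.1 * σ i).trace)^2 = (t ((π i).symm Q))^2 := by
    intro i Q
    set P : {P : Fin n → Fin 4 // P ≠ 0} := (π i).symm Q with hPdef
    have hπ : π i P = Q := Equiv.apply_symm_apply _ _
    have hconj' := hconj i P
    rw [hπ] at hconj'
    have key : (ε i P : ℂ) * (pauliMatrix Q.1 * σ i).trace = (pauliMatrix P.1 * ρ).trace := by
      have h1 := congrArg (fun A => (A * σ i).trace) hconj'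
      simp only [Matrix.smul_mul, Matrix.trace_smul, smul_eq_mul] at h1
      rw [← h1]
      show ((U i * pauliMatrix P.1 * (U i)ᴴ) * (U i * ρ * (U i)ᴴ)).trace = _
      exact trace_conj_mul (U i) (pauliMatrix P.1) ρ (hUU i)
    have hε2 : (ε i P : ℂ)^2 = 1 := by
      rcases hε i P with h | h <;> rw [h] <;> norm_num
    calc ((pauliMatrix Q.1 * σ i).trace)^2
        = (ε i P : ℂ)^2 * ((pauliMatrix Q.1 * σ i).trace)^2 := by rw [hε2, one_mul]
      _ = ((ε i P : ℂ) * (pauliMatrix Q.1 * σ i).trace)^2 := by ring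
      _ = (t P)^2 := by rw [key]
  -- splitting a sum over all Pauli strings
  have hsplitP : ∀ f : (Fin n → Fin 4) → ℂ,
      ∑ P : Fin n → Fin 4, f P = f 0 + ∑ Q : {P : Fin n → Fin 4 // P ≠ 0}, f Q.1 := by
    intro f
    rw [← Finset.sum_filter_add_sum_filter_not Finset.univ (fun P : Fin n → Fin 4 => P = 0) f]
    congr 1
    · rw [Finset.filter_eq' Finset.univ (0 : Fin n → Fin 4), if_pos (Finset.mem_univ _),
        Finset.sum_singleton]
    · exact Finset.sum_subtype _ (by simp) f
  -- per-element purity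
  have hTr : ∀ i, (depolN p (σ i) * depolN p (σ i)).trace
      = ((2:ℂ)^n)⁻¹ * (1 + ∑ Q : {P : Fin n → Fin 4 // P ≠ 0},
          (p:ℂ) ^ (2 * pweight Q.1) * (t ((π i).symm Q))^2) := by
    intro i
    rw [trace_depolN_sq]
    congr 1
    rw [hsplitP (fun P => (p:ℂ) ^ (2 * pweight P) * ((pauliMatrix P * σ i).trace)^2)]
    congr 1
    · rw [hc0 i]
      simp [pweight]
    · exact Finset.sum_congr rfl fun Q _ => by rw [hcQ i Q]
  -- total Pauli coefficient mass of ρ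
  have hT : ∑ Q : {P : Fin n → Fin 4 // P ≠ 0}, (t Q)^2 = (2:ℂ)^n * (ρ * ρ).trace - 1 := by
    have h := trace_pauli_sq_sum ρ ρ
    rw [hsplitP (fun P => (pauliMatrix P * ρ).trace * (pauliMatrix P * ρ).trace)] at h
    rw [pauliMatrix_zero, Matrix.one_mul, htr] at h
    have : ∑ Q : {P : Fin n → Fin 4 // P ≠ 0}, (t Q)^2
        = ∑ Q : {P : Fin n → Fin 4 // P ≠ 0}, (pauliMatrix Q.1 * ρ).trace * (pauliMatrix Q.1 * ρ).trace := by
      refine Finset.sum_congr rfl fun Q _ => by rw [htdef]; ring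
    rw [this]
    linear_combination h
  -- weight generating sum over the nonzero subtype
  have hW : ∑ Q : {P : Fin n → Fin 4 // P ≠ 0}, (p:ℂ) ^ (2 * pweight Q.1) = W := by
    rw [hWdef, ← weight_sum p]
    exact (Finset.sum_subtype _ (by simp) (fun P => (p:ℂ) ^ (2 * pweight P))).symm
  -- cast of probability sums
  have hqsumC : ∑ i, (q i : ℂ) = 1 := by exact_mod_cast hqsum
  -- fiberwise mixing
  have hfiber : ∀ Q : {P : Fin n → Fin 4 // P ≠ 0},
      ∑ i, (q i : ℂ) * (t ((π i).symm Q))^2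
        = r * ((2:ℂ)^n * (ρ * ρ).trace - 1) := by
    intro Q
    rw [← Finset.sum_fiberwise Finset.univ (fun i => (π i).symm Q)
      (fun i => (q i : ℂ) * (t ((π i).symm Q))^2)]
    have step : ∀ P : {P : Fin n → Fin 4 // P ≠ 0},
        ∑ i ∈ Finset.univ.filter (fun i => (π i).symm Q = P),
          (q i : ℂ) * (t ((π i).symm Q))^2 = r * (t P)^2 := by
      intro P
      have hfeq : Finset.univ.filter (fun i => (π i).symm Q = P)
          = Finset.univ.filter (fun i => π i P = Q) := by
        apply Finset.filter_congr
        intro i _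
        rw [Equiv.symm_apply_eq]
        exact ⟨fun h => h.symm, fun h => h.symm⟩
      have hqP : ∑ i ∈ Finset.univ.filter (fun i => (π i).symm Q = P), (q i : ℂ) = r := by
        rw [hfeq]
        have := hmix P Q
        have hcast : ((∑ i ∈ Finset.univ.filter (fun i => π i P = Q), q i : ℝ) : ℂ)
            = ((1 / (4 ^ n - 1) : ℝ) : ℂ) := by rw [this]
        push_cast at hcast
        rw [hcast, hrdef]
        rw [one_div]
      calc ∑ i ∈ Finset.univ.filter (fun i => (π i).symm Q = P),
            (q i : ℂ) * (t ((π i).symm Q))^2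
          = ∑ i ∈ Finset.univ.filter (fun i => (π i).symm Q = P), (q i : ℂ) * (t P)^2 := by
            refine Finset.sum_congr rfl fun i hi => ?_
            rw [(Finset.mem_filter.mp hi).2]
        _ = (∑ i ∈ Finset.univ.filter (fun i => (π i).symm Q = P), (q i : ℂ)) * (t P)^2 := by
            rw [Finset.sum_mul]
        _ = r * (t P)^2 := by rw [hqP]
    rw [Finset.sum_congr rfl fun P _ => step P]
    rw [← Finset.mul_sum, hT]
  -- main computation
  calc ∑ i, (q i : ℂ) * (depolN p (σ i) * depolN p (σ i)).trace
      = ∑ i, (((2:ℂ)^n)⁻¹ * (q i : ℂ)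
          + ((2:ℂ)^n)⁻¹ * ((q i : ℂ) * ∑ Q : {P : Fin n → Fin 4 // P ≠ 0},
              (p:ℂ) ^ (2 * pweight Q.1) * (t ((π i).symm Q))^2)) := by
        refine Finset.sum_congr rfl fun i _ => ?_
        rw [hTr i]; ring
    _ = ((2:ℂ)^n)⁻¹ * (∑ i, (q i : ℂ))
          + ((2:ℂ)^n)⁻¹ * ∑ i, (q i : ℂ) * ∑ Q : {P : Fin n → Fin 4 // P ≠ 0},
              (p:ℂ) ^ (2 * pweight Q.1) * (t ((π i).symm Q))^2 := by
        rw [Finset.sum_add_distrib, Finset.mul_sum, Finset.mul_sum]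
    _ = ((2:ℂ)^n)⁻¹
          + ((2:ℂ)^n)⁻¹ * (W * (r * ((2:ℂ)^n * (ρ * ρ).trace - 1))) := by
        rw [hqsumC, mul_one]
        congr 1
        congr 1
        calc ∑ i, (q i : ℂ) * ∑ Q : {P : Fin n → Fin 4 // P ≠ 0},
                (p:ℂ) ^ (2 * pweight Q.1) * (t ((π i).symm Q))^2
            = ∑ i, ∑ Q : {P : Fin n → Fin 4 // P ≠ 0},
                (p:ℂ) ^ (2 * pweight Q.1) * ((q i : ℂ) * (t ((π i).symm Q))^2) := by
              refine Finset.sum_congr rfl fun i _ => ?_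
              rw [Finset.mul_sum]
              exact Finset.sum_congr rfl fun Q _ => by ring
          _ = ∑ Q : {P : Fin n → Fin 4 // P ≠ 0}, ∑ i,
                (p:ℂ) ^ (2 * pweight Q.1) * ((q i : ℂ) * (t ((π i).symm Q))^2) := by
              rw [Finset.sum_comm]
          _ = ∑ Q : {P : Fin n → Fin 4 // P ≠ 0},
                (p:ℂ) ^ (2 * pweight Q.1) * (r * ((2:ℂ)^n * (ρ * ρ).trace - 1)) := by
              refine Finset.sum_congr rfl fun Q _ => ?_
              rw [← Finset.mul_sum, hfiber Q]
          _ = W * (r * ((2:ℂ)^n * (ρ * ρ).trace - 1)) := by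
              rw [← Finset.sum_mul, hW]
    _ = ((2:ℂ)^n)⁻¹ + ((ρ * ρ).trace - ((2:ℂ)^n)⁻¹) * r * W := by
        have hkey : ((2:ℂ)^n)⁻¹ * ((2:ℂ)^n * (ρ * ρ).trace - 1)
            = (ρ * ρ).trace - ((2:ℂ)^n)⁻¹ := by
          field_simp
        linear_combination (W * r) * hkey
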